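/- arXiv:2211.13122 — 2 statements merged into one kernel-verified Lean document; each statement's English description precedes it below -/
import Mathlib

section
/- Let v ∈ ℝ³ with first coordinate v₁ = 0 and let κ ∈ ℝ. Then ∫_{θ=−π/2}^{π/2} ∫_{φ=−π/2}^{π/2} exp(iκ ⟨d(θ, φ), v⟩) · (cos θ)/(2π) dφ dθ = sinc(κ‖v‖). In particular, for a planar array whose element positions u_1, …, u_N all lie in the y–z plane (first coordinate zero), the spatial correlation of an isotropic half-space scattering environment between elements m and n equals sinc(κ‖u_m − u_n‖). -/
open Real MeasureTheory RealInnerProductSpace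

/-- `sinc x = sin x / x` for `x ≠ 0`, and `sinc 0 = 1`. -/
noncomputable def sinc (x : ℝ) : ℝ := if x = 0 then 1 else Real.sin x / x

/-- Unit direction vector `d(θ, φ) = (cos θ cos φ, cos θ sin φ, sin θ) ∈ ℝ³`. -/
noncomputable def dirVec (θ φ : ℝ) : EuclideanSpace ℝ (Fin 3) :=
  (WithLp.equiv 2 (Fin 3 → ℝ)).symm
    ![Real.cos θ * Real.cos φ, Real.cos θ * Real.sin φ, Real.sin θ]

/-- Half-space average of a plane wave over the isotropic density `cos θ / (2π)`,
seen at displacement `v`. -/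
noncomputable def halfSpaceCorr (κ : ℝ) (v : EuclideanSpace ℝ (Fin 3)) : ℂ :=
  ∫ θ in Set.Icc (-(π / 2)) (π / 2),
    ∫ φ in Set.Icc (-(π / 2)) (π / 2),
      Complex.exp (Complex.I * κ * (⟪dirVec θ φ, v⟫ : ℝ)) * ((Real.cos θ) / (2 * π))

namespace HSC

open Set

lemma image_sin : Real.sin '' Ioo (-(π/2)) (π/2) = Ioo (-1 : ℝ) 1 := by
  ext x
  constructor
  · rintro ⟨φ, hφ, rfl⟩
    have h1 : Real.sin φ < 1 := by
      have := Real.strictMonoOn_sin (Set.mem_Icc.2 ⟨hφ.1.le, hφ.2.le⟩)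
        (Set.mem_Icc.2 ⟨by linarith [Real.pi_pos, hφ.2], le_refl _⟩) hφ.2
      simpa using this
    have h2 : -1 < Real.sin φ := by
      have := Real.strictMonoOn_sin (Set.mem_Icc.2 ⟨le_refl _, by linarith [Real.pi_pos, hφ.1]⟩)
        (Set.mem_Icc.2 ⟨hφ.1.le, hφ.2.le⟩) hφ.1
      simpa using this
    exact ⟨h2, h1⟩
  · intro hx
    exact ⟨Real.arcsin x, ⟨Real.neg_pi_div_two_lt_arcsin.mpr hx.1,
      Real.arcsin_lt_pi_div_two.mpr hx.2⟩, Real.sin_arcsin hx.1.le hx.2.le⟩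

lemma image_csin {c : ℝ} (hc : 0 < c) :
    (fun φ => c * Real.sin φ) '' Ioo (-(π/2)) (π/2) = Ioo (-c) c := by
  have : (fun φ => c * Real.sin φ) = (fun y => c * y) ∘ Real.sin := rfl
  rw [this, Set.image_comp, image_sin]
  have := Set.image_mul_left_Ioo hc (-1 : ℝ) 1
  simpa using this

lemma injOn_csin {c : ℝ} (hc : 0 < c) :
    Set.InjOn (fun φ => c * Real.sin φ) (Ioo (-(π/2)) (π/2)) := by
  intro x hx y hy h
  exact Real.injOn_sin (Ioo_subset_Icc_self hx) (Ioo_subset_Icc_self hy)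
    (mul_left_cancel₀ hc.ne' h)

variable {F : Type*} [NormedAddCommGroup F] [NormedSpace ℝ F]

lemma subst_csin {c : ℝ} (hc : 0 < c) (g : ℝ → F) :
    ∫ t in Ioo (-c) c, g t
      = ∫ φ in Ioo (-(π/2)) (π/2), (c * Real.cos φ) • g (c * Real.sin φ) := by
  rw [← image_csin hc,
    integral_image_eq_integral_abs_deriv_smul measurableSet_Ioo
      (fun φ _ => ((Real.hasDerivAt_sin φ).const_mul c).hasDerivWithinAt)
      (injOn_csin hc) g]
  refine setIntegral_congr_fun measurableSet_Ioo fun φ hφ => ?_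
  rw [abs_of_pos (mul_pos hc (Real.cos_pos_of_mem_Ioo hφ))]

lemma subst_csin_integrableOn {c : ℝ} (hc : 0 < c) (g : ℝ → F) :
    IntegrableOn g (Ioo (-c) c) ↔
      IntegrableOn (fun φ => (c * Real.cos φ) • g (c * Real.sin φ))
        (Ioo (-(π/2)) (π/2)) := by
  rw [← image_csin hc,
    integrableOn_image_iff_integrableOn_abs_deriv_smul measurableSet_Ioo
      (fun φ _ => ((Real.hasDerivAt_sin φ).const_mul c).hasDerivWithinAt)
      (injOn_csin hc) g]
  exact integrableOn_congr_fun
    (fun φ hφ => by rw [abs_of_pos (mul_pos hc (Real.cos_pos_of_mem_Ioo hφ))])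
    measurableSet_Ioo

lemma sqrt_csin {c : ℝ} (hc : 0 < c) {φ : ℝ} (hφ : φ ∈ Ioo (-(π/2)) (π/2)) :
    Real.sqrt (c^2 - (c * Real.sin φ)^2) = c * Real.cos φ := by
  have h1 : c^2 - (c * Real.sin φ)^2 = (c * Real.cos φ)^2 := by
    nlinarith [Real.sin_sq_add_cos_sq φ]
  rw [h1, Real.sqrt_sq (mul_pos hc (Real.cos_pos_of_mem_Ioo hφ)).le]

lemma volume_Ioo_pi : (volume (Ioo (-(π/2)) (π/2))).toReal = π := by
  rw [Real.volume_Ioo]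
  rw [ENNReal.toReal_ofReal (by linarith [Real.pi_pos])]
  ring

lemma L0 {c : ℝ} (hc : 0 < c) :
    ∫ t in Ioo (-c) c, 1 / Real.sqrt (c^2 - t^2) = π := by
  rw [subst_csin hc]
  have : ∫ φ in Ioo (-(π/2)) (π/2),
      (c * Real.cos φ) • (1 / Real.sqrt (c^2 - (c * Real.sin φ)^2))
      = ∫ φ in Ioo (-(π/2)) (π/2), (1:ℝ) := by
    refine setIntegral_congr_fun measurableSet_Ioo fun φ hφ => ?_
    have h2 : c * Real.cos φ ≠ 0 := (mul_pos hc (Real.cos_pos_of_mem_Ioo hφ)).ne'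
    rw [sqrt_csin hc hφ]
    rw [smul_eq_mul, mul_one_div_cancel h2]
  rw [this, setIntegral_const, smul_eq_mul, mul_one, measureReal_def, volume_Ioo_pi]

lemma L0i {c : ℝ} (hc : 0 < c) :
    IntegrableOn (fun t => 1 / Real.sqrt (c^2 - t^2)) (Ioo (-c) c) := by
  rw [subst_csin_integrableOn hc]
  refine IntegrableOn.congr_fun
    (integrableOn_const (C := (1:ℝ))
      (by rw [Real.volume_Ioo]; exact ENNReal.ofReal_ne_top))
    (fun φ hφ => ?_) measurableSet_Ioo
  have h2 : c * Real.cos φ ≠ 0 := (mul_pos hc (Real.cos_pos_of_mem_Ioo hφ)).ne'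
  rw [sqrt_csin hc hφ]
  rw [smul_eq_mul, mul_one_div_cancel h2]

lemma smul_div_cancel_ofReal {x : ℝ} (hx : x ≠ 0) (z : ℂ) : x • (z / (x:ℂ)) = z := by
  rw [Complex.real_smul, mul_comm, div_mul_cancel₀ _ (Complex.ofReal_ne_zero.mpr hx)]

noncomputable def Kf (κ a b s : ℝ) : ℂ :=
  ∫ t in Ioo (-Real.sqrt (1-s^2)) (Real.sqrt (1-s^2)),
    Complex.exp (Complex.I * κ * ((a*t + b*s : ℝ) : ℂ)) / ((Real.sqrt (1 - s^2 - t^2) : ℝ) : ℂ)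

lemma sqrt_pos_of_mem {s : ℝ} (hs : s ∈ Ioo (-1:ℝ) 1) : 0 < Real.sqrt (1 - s^2) := by
  apply Real.sqrt_pos.mpr
  nlinarith [hs.1, hs.2]

lemma sq_sqrt_of_mem {s : ℝ} (hs : s ∈ Ioo (-1:ℝ) 1) :
    (Real.sqrt (1 - s^2))^2 = 1 - s^2 :=
  Real.sq_sqrt (by nlinarith [hs.1, hs.2])

lemma Kf_eq_phi (κ a b : ℝ) {s : ℝ} (hs : s ∈ Ioo (-1:ℝ) 1) :
    Kf κ a b s = ∫ φ in Ioo (-(π/2)) (π/2),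
      Complex.exp (Complex.I * κ *
        ((a*(Real.sqrt (1-s^2) * Real.sin φ) + b*s : ℝ) : ℂ)) := by
  have hc := sqrt_pos_of_mem hs
  set c := Real.sqrt (1-s^2) with hcdef
  have hc2 : c^2 = 1 - s^2 := sq_sqrt_of_mem hs
  rw [Kf, subst_csin hc]
  refine setIntegral_congr_fun measurableSet_Ioo fun φ hφ => ?_
  have h3 : Real.sqrt (1 - s^2 - (c * Real.sin φ)^2) = c * Real.cos φ := by
    rw [← hc2]; exact sqrt_csin hc hφ
  have h4 : (c * Real.cos φ : ℝ) ≠ 0 := (mul_pos hc (Real.cos_pos_of_mem_Ioo hφ)).ne'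
  rw [h3, smul_div_cancel_ofReal h4]

lemma Kf_integrandOn {κ a b s : ℝ} (hs : s ∈ Ioo (-1:ℝ) 1) :
    IntegrableOn
      (fun t => Complex.exp (Complex.I * κ * ((a*t + b*s : ℝ) : ℂ)) /
        ((Real.sqrt (1 - s^2 - t^2) : ℝ) : ℂ))
      (Ioo (-Real.sqrt (1-s^2)) (Real.sqrt (1-s^2))) := by
  have hc := sqrt_pos_of_mem hs
  set c := Real.sqrt (1-s^2) with hcdef
  have hc2 : c^2 = 1 - s^2 := sq_sqrt_of_mem hs
  rw [subst_csin_integrableOn hc]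
  have hcont : Continuous fun φ : ℝ => Complex.exp (Complex.I * κ *
      ((a*(c * Real.sin φ) + b*s : ℝ) : ℂ)) := by
    apply Complex.continuous_exp.comp
    continuity
  refine IntegrableOn.congr_fun ((hcont.continuousOn.integrableOn_compact isCompact_Icc).mono_set Ioo_subset_Icc_self)
    (fun φ hφ => ?_) measurableSet_Ioo
  have h3 : Real.sqrt (1 - s^2 - (c * Real.sin φ)^2) = c * Real.cos φ := by
    rw [← hc2]; exact sqrt_csin hc hφ
  have h4 : (c * Real.cos φ : ℝ) ≠ 0 := (mul_pos hc (Real.cos_pos_of_mem_Ioo hφ)).ne'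
  rw [h3, smul_div_cancel_ofReal h4]

noncomputable def Df (κ a b : ℝ) : ℝ × ℝ → ℂ :=
  Set.indicator {q : ℝ × ℝ | q.1^2 + q.2^2 < 1}
    (fun q => Complex.exp (Complex.I * κ * ((a*q.2 + b*q.1 : ℝ) : ℂ)) /
      ((Real.sqrt (1 - q.1^2 - q.2^2) : ℝ) : ℂ))

lemma sect_mem {s : ℝ} (hs : s ∈ Ioo (-1:ℝ) 1) :
    {t : ℝ | s^2 + t^2 < 1} = Ioo (-Real.sqrt (1-s^2)) (Real.sqrt (1-s^2)) := by
  have hc := sqrt_pos_of_mem hs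
  have hc2 := sq_sqrt_of_mem hs
  ext t
  simp only [mem_setOf_eq, mem_Ioo]
  constructor
  · intro h
    have h2 : t^2 < (Real.sqrt (1-s^2))^2 := by nlinarith
    exact abs_lt_of_sq_lt_sq' h2 hc.le
  · rintro ⟨h1, h2⟩
    have := sq_lt_sq' h1 h2
    nlinarith

lemma measurable_Df (κ a b : ℝ) : Measurable (Df κ a b) := by
  apply Measurable.indicator
  · have h1 : Measurable fun q : ℝ × ℝ => Complex.exp (Complex.I * κ * ((a*q.2 + b*q.1 : ℝ) : ℂ)) :=
      (Complex.continuous_exp.comp (by continuity)).measurable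
    have h2 : Measurable fun q : ℝ × ℝ => ((Real.sqrt (1 - q.1^2 - q.2^2) : ℝ) : ℂ) :=
      (Complex.continuous_ofReal.comp (by continuity)).measurable
    exact h1.div h2
  · exact (isOpen_lt (by continuity) continuous_const).measurableSet

lemma norm_exp_I (κ x : ℝ) : ‖Complex.exp (Complex.I * κ * (x:ℂ))‖ = 1 := by
  rw [show Complex.I * κ * (x:ℂ) = ((κ*x : ℝ):ℂ) * Complex.I by push_cast; ring]
  rw [Complex.norm_exp_ofReal_mul_I]

lemma Df_sect_one {κ a b s : ℝ} (hs : s ∈ Ioo (-1:ℝ) 1) :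
    (fun t => Df κ a b (s, t)) = Set.indicator (Ioo (-Real.sqrt (1-s^2)) (Real.sqrt (1-s^2)))
      (fun t => Complex.exp (Complex.I * κ * ((a*t + b*s : ℝ) : ℂ)) /
        ((Real.sqrt (1 - s^2 - t^2) : ℝ) : ℂ)) := by
  funext t
  have hmem : t ∈ Ioo (-Real.sqrt (1-s^2)) (Real.sqrt (1-s^2)) ↔ s^2 + t^2 < 1 := by
    rw [← sect_mem hs]; simp
  by_cases h : s^2 + t^2 < 1
  · rw [Df, Set.indicator_of_mem (by simpa using h), Set.indicator_of_mem (hmem.mpr h)]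
  · rw [Df, Set.indicator_of_notMem (by simpa using h),
      Set.indicator_of_notMem (fun hh => h (hmem.mp hh))]

lemma Df_sect_zero {κ a b s : ℝ} (hs : s ∉ Ioo (-1:ℝ) 1) :
    (fun t => Df κ a b (s, t)) = 0 := by
  funext t
  have h1 : ¬ ((-1:ℝ) < s ∧ s < 1) := by simpa [mem_Ioo] using hs
  have h : ¬ (s^2 + t^2 < 1) := by
    rcases le_or_gt s (-1) with h2 | h2
    · nlinarith
    · rcases le_or_gt 1 s with h3 | h3
      · nlinarith
      · exact absurd ⟨h2, h3⟩ h1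
  exact Set.indicator_of_notMem (by simpa using h) _

lemma integrable_Df (κ a b : ℝ) : Integrable (Df κ a b) := by
  rw [Measure.volume_eq_prod]
  refine (integrable_prod_iff (measurable_Df κ a b).aestronglyMeasurable).2 ⟨?_, ?_⟩
  · refine Filter.Eventually.of_forall fun s => ?_
    by_cases hs : s ∈ Ioo (-1:ℝ) 1
    · rw [show (fun y => Df κ a b (s, y)) = _ from Df_sect_one hs,
        integrable_indicator_iff measurableSet_Ioo]
      exact Kf_integrandOn hs
    · rw [show (fun y => Df κ a b (s, y)) = _ from Df_sect_zero hs]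
      exact integrable_zero _ _ _
  · have heq : (fun s => ∫ t, ‖Df κ a b (s, t)‖) =
        Set.indicator (Ioo (-1:ℝ) 1) (fun _ => π) := by
      funext s
      by_cases hs : s ∈ Ioo (-1:ℝ) 1
      · have hc := sqrt_pos_of_mem hs
        have hc2 := sq_sqrt_of_mem hs
        have hnorm : (fun t => ‖Df κ a b (s, t)‖) =
            Set.indicator (Ioo (-Real.sqrt (1-s^2)) (Real.sqrt (1-s^2)))
              (fun t => 1 / Real.sqrt ((Real.sqrt (1-s^2))^2 - t^2)) := by
          funext t
          rw [congrFun (Df_sect_one hs) t, norm_indicator_eq_indicator_norm]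
          by_cases ht : t ∈ Ioo (-Real.sqrt (1-s^2)) (Real.sqrt (1-s^2))
          · rw [Set.indicator_of_mem ht, Set.indicator_of_mem ht]
            have hpos : 0 < Real.sqrt (1 - s^2 - t^2) := by
              apply Real.sqrt_pos.mpr
              have := sq_lt_sq' ht.1 ht.2
              nlinarith
            rw [norm_div, norm_exp_I, Complex.norm_real, Real.norm_eq_abs,
              abs_of_pos hpos, hc2]
          · rw [Set.indicator_of_notMem ht, Set.indicator_of_notMem ht]
        rw [hnorm, integral_indicator measurableSet_Ioo, Set.indicator_of_mem hs]
        exact L0 hc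
      · have h0 := Df_sect_zero (κ := κ) (a := a) (b := b) hs
        simp only [congrFun h0, Pi.zero_apply, norm_zero, integral_zero,
          Set.indicator_of_notMem hs]
    rw [heq, integrable_indicator_iff measurableSet_Ioo]
    exact integrableOn_const
      (by rw [Real.volume_Ioo]; exact ENNReal.ofReal_ne_top)

lemma integral_Df (κ a b : ℝ) :
    ∫ p, Df κ a b p = ∫ s in Ioo (-1:ℝ) 1, Kf κ a b s := by
  rw [Measure.volume_eq_prod, integral_prod _ (by rw [← Measure.volume_eq_prod]; exact integrable_Df κ a b)]
  have : (fun s => ∫ t, Df κ a b (s, t)) =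
      Set.indicator (Ioo (-1:ℝ) 1) (fun s => Kf κ a b s) := by
    funext s
    by_cases hs : s ∈ Ioo (-1:ℝ) 1
    · rw [show (fun t => Df κ a b (s, t)) = _ from Df_sect_one hs,
        integral_indicator measurableSet_Ioo, Set.indicator_of_mem hs, Kf]
    · rw [show (fun t => Df κ a b (s, t)) = _ from Df_sect_zero hs,
        Set.indicator_of_notMem hs]
      simp
  rw [this, integral_indicator measurableSet_Ioo]

noncomputable def wvec (b a : ℝ) : EuclideanSpace ℝ (Fin 2) :=
  (WithLp.equiv 2 (Fin 2 → ℝ)).symm ![b, a]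

noncomputable def indE (κ : ℝ) (w : EuclideanSpace ℝ (Fin 2)) :
    EuclideanSpace ℝ (Fin 2) → ℂ :=
  Set.indicator {y : EuclideanSpace ℝ (Fin 2) | ‖y‖ < 1}
    (fun y => Complex.exp (Complex.I * κ * ((⟪y, w⟫ : ℝ) : ℂ)) /
      ((Real.sqrt (1 - ‖y‖^2) : ℝ) : ℂ))

lemma wvec_norm (b a : ℝ) : ‖wvec b a‖ = Real.sqrt (b^2 + a^2) := by
  rw [EuclideanSpace.norm_eq]
  congr 1
  simp [wvec, Fin.sum_univ_two, sq_abs]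

lemma Df_eq_indE (κ a b : ℝ) (x : EuclideanSpace ℝ (Fin 2)) :
    Df κ a b (x 0, x 1) = indE κ (wvec b a) x := by
  have hn : ‖x‖^2 = x 0^2 + x 1^2 := by
    rw [EuclideanSpace.norm_eq, Real.sq_sqrt (by positivity)]
    simp [Fin.sum_univ_two, sq_abs]
  have hip : (⟪x, wvec b a⟫ : ℝ) = a * x 1 + b * x 0 := by
    simp [wvec, PiLp.inner_apply, Fin.sum_univ_two, RCLike.inner_apply]
    ring
  have harg : 1 - (x 0)^2 - (x 1)^2 = 1 - ‖x‖^2 := by rw [hn]; ring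
  by_cases h : x 0^2 + x 1^2 < 1
  · have h1 : ‖x‖ < 1 := by nlinarith [norm_nonneg x]
    rw [Df, indE, Set.indicator_of_mem (show ((x 0 : ℝ), (x 1 : ℝ)) ∈
        {q : ℝ × ℝ | q.1^2 + q.2^2 < 1} by simpa using h),
      Set.indicator_of_mem (show x ∈ {y : EuclideanSpace ℝ (Fin 2) | ‖y‖ < 1} from h1)]
    simp only [hip, harg]
  · have h1 : ¬ (‖x‖ < 1) := by
      intro hlt
      exact h (by nlinarith [norm_nonneg x])
    rw [Df, indE, Set.indicator_of_notMem (show ¬ ((x 0 : ℝ), (x 1 : ℝ)) ∈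
        {q : ℝ × ℝ | q.1^2 + q.2^2 < 1} by simpa using h),
      Set.indicator_of_notMem (show ¬ x ∈ {y : EuclideanSpace ℝ (Fin 2) | ‖y‖ < 1} from h1)]

lemma transfer (κ a b : ℝ) :
    ∫ p, Df κ a b p = ∫ x : EuclideanSpace ℝ (Fin 2), indE κ (wvec b a) x := by
  have mp : MeasurePreserving
      (fun x : EuclideanSpace ℝ (Fin 2) => ((x 0 : ℝ), (x 1 : ℝ))) volume volume :=
    (volume_preserving_finTwoArrow ℝ).comp
      (EuclideanSpace.volume_preserving_symm_measurableEquiv_toLp (Fin 2))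
  have emb : MeasurableEmbedding
      (fun x : EuclideanSpace ℝ (Fin 2) => ((x 0 : ℝ), (x 1 : ℝ))) :=
    ((MeasurableEquiv.toLp 2 (Fin 2 → ℝ)).symm.trans
      (MeasurableEquiv.finTwoArrow)).measurableEmbedding
  rw [← mp.integral_comp emb (Df κ a b)]
  exact integral_congr_ae (Filter.Eventually.of_forall fun x => Df_eq_indE κ a b x)

lemma rot (κ : ℝ) {w w' : EuclideanSpace ℝ (Fin 2)} (h : ‖w'‖ = ‖w‖) :
    ∫ x, indE κ w x = ∫ x, indE κ w' x := by
  set R := Submodule.reflection (ℝ ∙ (w' - w))ᗮ with hRdef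
  have hR : R w' = w := Submodule.reflection_sub h
  have key : ∀ x, indE κ w (R x) = indE κ w' x := by
    intro x
    simp only [indE]
    by_cases hx : ‖x‖ < 1
    · rw [Set.indicator_of_mem (show R x ∈ {y : EuclideanSpace ℝ (Fin 2) | ‖y‖ < 1} by
        simpa [R.norm_map] using hx),
        Set.indicator_of_mem (show x ∈ {y : EuclideanSpace ℝ (Fin 2) | ‖y‖ < 1} from hx)]
      rw [R.norm_map, ← hR, R.inner_map_map]
    · rw [Set.indicator_of_notMem (show ¬ R x ∈ {y : EuclideanSpace ℝ (Fin 2) | ‖y‖ < 1} by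
        simpa [R.norm_map] using hx),
        Set.indicator_of_notMem (show ¬ x ∈ {y : EuclideanSpace ℝ (Fin 2) | ‖y‖ < 1} from hx)]
  calc ∫ x, indE κ w x
      = ∫ x, indE κ w (R x) :=
        (R.measurePreserving.integral_comp
          R.toHomeomorph.measurableEmbedding (indE κ w)).symm
    _ = ∫ x, indE κ w' x := integral_congr_ae (Filter.Eventually.of_forall key)

lemma sin_mem_Ioo {θ : ℝ} (hθ : θ ∈ Ioo (-(π/2)) (π/2)) :
    Real.sin θ ∈ Ioo (-1:ℝ) 1 :=
  image_sin ▸ Set.mem_image_of_mem Real.sin hθ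

lemma sqrt_one_sub_sin_sq {θ : ℝ} (hθ : θ ∈ Ioo (-(π/2)) (π/2)) :
    Real.sqrt (1 - Real.sin θ^2) = Real.cos θ := by
  rw [show 1 - Real.sin θ^2 = Real.cos θ^2 by nlinarith [Real.sin_sq_add_cos_sq θ],
    Real.sqrt_sq (Real.cos_pos_of_mem_Ioo hθ).le]

lemma halfSpaceCorr_eq (κ : ℝ) (v : EuclideanSpace ℝ (Fin 3)) (hv : v 0 = 0) :
    halfSpaceCorr κ v
      = (1/(2*π) : ℝ) • ∫ s in Ioo (-1:ℝ) 1, Kf κ (v 1) (v 2) s := by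
  set a := v 1 with ha
  set b := v 2 with hb
  have hinner : ∀ θ φ : ℝ, (⟪dirVec θ φ, v⟫ : ℝ)
      = a * (Real.cos θ * Real.sin φ) + b * Real.sin θ := by
    intro θ φ
    simp [dirVec, PiLp.inner_apply, Fin.sum_univ_three, RCLike.inner_apply, hv]
    ring
  rw [halfSpaceCorr, integral_Icc_eq_integral_Ioo]
  have hstep : ∀ θ ∈ Ioo (-(π/2)) (π/2),
      (∫ φ in Icc (-(π/2)) (π/2),
        Complex.exp (Complex.I * κ * ((⟪dirVec θ φ, v⟫ : ℝ) : ℂ)) * ((Real.cos θ) / (2*π)))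
      = (Real.cos θ / (2*π) : ℝ) • Kf κ a b (Real.sin θ) := by
    intro θ hθ
    have hs := sin_mem_Ioo hθ
    rw [integral_Icc_eq_integral_Ioo, Kf_eq_phi κ a b hs, sqrt_one_sub_sin_sq hθ]
    rw [show ∀ z : ℂ, (Real.cos θ / (2*π) : ℝ) • z = z * ((Real.cos θ : ℂ) / (2*(π:ℂ)))
      from fun z => by rw [Complex.real_smul]; push_cast; ring, ← integral_mul_const]
    refine setIntegral_congr_fun measurableSet_Ioo fun φ hφ => ?_
    rw [hinner]
  rw [setIntegral_congr_fun measurableSet_Ioo hstep]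
  have hsmul : ∀ θ : ℝ, (Real.cos θ / (2*π) : ℝ) • Kf κ a b (Real.sin θ)
      = (1/(2*π) : ℝ) • ((Real.cos θ) • Kf κ a b (Real.sin θ)) := by
    intro θ
    rw [smul_smul]
    congr 1
    ring
  simp only [hsmul]
  rw [integral_smul]
  congr 1
  rw [subst_csin (c := (1:ℝ)) one_pos (fun s => Kf κ a b s)]
  refine setIntegral_congr_fun measurableSet_Ioo fun φ hφ => by norm_num

lemma Kf_zero (κ r : ℝ) {s : ℝ} (hs : s ∈ Ioo (-1:ℝ) 1) :
    Kf κ 0 r s = Complex.exp (Complex.I * κ * ((r*s : ℝ):ℂ)) * ((π:ℝ) : ℂ) := by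
  have hc := sqrt_pos_of_mem hs
  have hc2 := sq_sqrt_of_mem hs
  rw [Kf]
  rw [setIntegral_congr_fun measurableSet_Ioo
    (g := fun t => Complex.exp (Complex.I * κ * ((r*s : ℝ):ℂ)) *
      ((1 / Real.sqrt ((Real.sqrt (1-s^2))^2 - t^2) : ℝ) : ℂ))
    (fun t ht => by rw [hc2]; push_cast; rw [zero_mul, zero_add, mul_one_div])]
  rw [integral_const_mul]
  congr 1
  have : ∫ t in Ioo (-Real.sqrt (1-s^2)) (Real.sqrt (1-s^2)),
      ((1 / Real.sqrt ((Real.sqrt (1-s^2))^2 - t^2) : ℝ) : ℂ)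
      = ((∫ t in Ioo (-Real.sqrt (1-s^2)) (Real.sqrt (1-s^2)),
          (1 / Real.sqrt ((Real.sqrt (1-s^2))^2 - t^2) : ℝ) : ℝ) : ℂ) :=
    integral_ofReal
  rw [this, L0 hc]

lemma int_exp (x : ℝ) :
    ∫ s in Ioo (-1:ℝ) 1, Complex.exp ((x:ℂ) * Complex.I * (s:ℂ))
      = 2 * (_root_.sinc x : ℂ) := by
  rw [← integral_Ioc_eq_integral_Ioo,
    ← intervalIntegral.integral_of_le (by norm_num : (-1:ℝ) ≤ 1)]
  by_cases hx : x = 0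
  · subst hx
    simp [_root_.sinc]
    norm_num
  · have hc : ((x:ℂ) * Complex.I) ≠ 0 :=
      mul_ne_zero (Complex.ofReal_ne_zero.mpr hx) Complex.I_ne_zero
    rw [integral_exp_mul_complex hc]
    have e2 : (x:ℂ) * Complex.I * (-1:ℝ) = (-(x:ℂ)) * Complex.I := by push_cast; ring
    have e1 : (x:ℂ) * Complex.I * (1:ℝ) = (x:ℂ) * Complex.I := by push_cast; ring
    rw [e1, e2, Complex.exp_mul_I, Complex.exp_mul_I, Complex.cos_neg, Complex.sin_neg]
    rw [div_eq_iff hc]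
    simp only [_root_.sinc, if_neg hx]
    push_cast
    field_simp
    rw [eq_div_iff (Complex.ofReal_ne_zero.mpr hx)]
    ring
end HSC

theorem halfspace_average_plane_wave_and_planar_array_correlation (κ : ℝ) :
    (∀ v : EuclideanSpace ℝ (Fin 3), v 0 = 0 →
        halfSpaceCorr κ v = (_root_.sinc (κ * ‖v‖) : ℂ)) ∧
    (∀ (N : ℕ) (u : Fin N → EuclideanSpace ℝ (Fin 3)),
        (∀ i, u i 0 = 0) → ∀ m n : Fin N,
          halfSpaceCorr κ (u m - u n) = (_root_.sinc (κ * ‖u m - u n‖) : ℂ)) := by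
  have key : ∀ v : EuclideanSpace ℝ (Fin 3), v 0 = 0 →
      halfSpaceCorr κ v = (_root_.sinc (κ * ‖v‖) : ℂ) := by
    intro v hv
    set a := v 1 with ha
    set b := v 2 with hb
    have hnv : ‖v‖^2 = b^2 + a^2 := by
      rw [EuclideanSpace.norm_eq, Real.sq_sqrt (by positivity)]
      simp [Fin.sum_univ_three, hv, sq_abs]
      ring
    have h2 : ∫ s in Set.Ioo (-1:ℝ) 1, HSC.Kf κ a b s
        = ∫ s in Set.Ioo (-1:ℝ) 1, HSC.Kf κ 0 ‖v‖ s := by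
      rw [← HSC.integral_Df, ← HSC.integral_Df, HSC.transfer, HSC.transfer]
      apply HSC.rot
      rw [HSC.wvec_norm, HSC.wvec_norm]
      congr 1
      rw [hnv]
      ring
    rw [HSC.halfSpaceCorr_eq κ v hv, h2,
      setIntegral_congr_fun measurableSet_Ioo (fun s hs => HSC.Kf_zero κ ‖v‖ hs)]
    rw [setIntegral_congr_fun measurableSet_Ioo
      (g := fun s : ℝ => Complex.exp ((((κ*‖v‖ : ℝ)) : ℂ) * Complex.I * (s:ℂ)) * ((π:ℝ):ℂ))
      (fun s _ => by push_cast; ring_nf)]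
    rw [integral_mul_const, HSC.int_exp]
    rw [Complex.real_smul]
    have hπ : (π:ℝ) ≠ 0 := Real.pi_ne_zero
    push_cast
    field_simp
  refine ⟨key, fun N u hu m n => key _ ?_⟩
  show u m 0 - u n 0 = 0
  rw [hu m, hu n, sub_zero]
end

section
/- Let (Ω, P) be a probability space and let Ψ = (θ, φ) be a random angle pair with joint density f(θ, φ) = cos(θ)/(2π) on θ, φ ∈ [−π/2, π/2]. Let u_1, …, u_N ∈ ℝ³ be element positions all having first coordinate zero, let λ > 0, κ = 2π/λ, and let a(Ψ) ∈ ℂ^N be the array steering vector. Then for all m, n, E[[a(Ψ)]_m · conj([a(Ψ)]_n)] = sinc(κ‖u_m − u_n‖). -/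
open Real MeasureTheory RealInnerProductSpace ProbabilityTheory

/-- Array steering vector: `[a(θ, φ)]_n = exp(i κ ⟨d(θ, φ), u_n⟩)`. -/
noncomputable def steering {N : ℕ} (κ : ℝ) (u : Fin N → EuclideanSpace ℝ (Fin 3))
    (θ φ : ℝ) (n : Fin N) : ℂ :=
  Complex.exp (Complex.I * κ * (⟪dirVec θ φ, u n⟫ : ℝ))

open Set
open scoped NNReal ENNReal

lemma hasDerivAt_arcsin_div {w : ℝ} (hw : 0 < w) {y : ℝ} (hy : y ∈ Ioo (-w) w) :
    HasDerivAt (fun y => Real.arcsin (y / w)) (1 / Real.sqrt (w^2 - y^2)) y := by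
  obtain ⟨h1, h2⟩ := hy
  have hw0 : w ≠ 0 := hw.ne'
  have hne1 : y / w ≠ -1 := fun h => by
    rw [div_eq_iff hw0] at h; rw [h] at h1; linarith
  have hne2 : y / w ≠ 1 := fun h => by
    rw [div_eq_iff hw0] at h; rw [h] at h2; linarith
  have hpos : (0:ℝ) < w ^ 2 - y ^ 2 := by nlinarith
  have := (Real.hasDerivAt_arcsin hne1 hne2).comp y (hasDerivAt_id y |>.div_const w)
  refine this.congr_deriv ?_
  have heq : 1 - (y/w)^2 = (w^2 - y^2)/w^2 := by field_simp
  have hsq : Real.sqrt (w^2 - y^2) = Real.sqrt (1 - (y/w)^2) * w := by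
    rw [heq, Real.sqrt_div hpos.le, Real.sqrt_sq hw.le, div_mul_cancel₀ _ hw0]
  have h0 : Real.sqrt (w ^ 2 - y ^ 2) ≠ 0 := by positivity
  rw [hsq] at h0 ⊢
  field_simp

lemma intA_integrable {w : ℝ} (hw : 0 < w) :
    IntegrableOn (fun y => 1 / Real.sqrt (w^2 - y^2)) (Ioo (-w) w) := by
  have := intervalIntegral.integrableOn_deriv_of_nonneg (g := fun y => Real.arcsin (y / w))
    (g' := fun y => 1 / Real.sqrt (w^2 - y^2)) (a := -w) (b := w)
    (Real.continuous_arcsin.comp (continuous_id.div_const w) |>.continuousOn)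
    (fun y hy => hasDerivAt_arcsin_div hw hy) (fun y _ => by positivity)
  exact this.mono_set Ioo_subset_Ioc_self

lemma intA_value {w : ℝ} (hw : 0 < w) :
    ∫ y in Ioo (-w) w, 1 / Real.sqrt (w^2 - y^2) = π := by
  have hle : -w ≤ w := by linarith
  have hint : IntervalIntegrable (fun y => 1 / Real.sqrt (w^2 - y^2)) volume (-w) w := by
    rw [intervalIntegrable_iff_integrableOn_Ioo_of_le hle]
    exact intA_integrable hw
  have := intervalIntegral.integral_eq_sub_of_hasDeriv_right_of_le hle
    (f := fun y => Real.arcsin (y / w)) (f' := fun y => 1 / Real.sqrt (w^2 - y^2))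
    (Real.continuous_arcsin.comp (continuous_id.div_const w) |>.continuousOn)
    (fun y hy => (hasDerivAt_arcsin_div hw hy).hasDerivWithinAt) hint
  rw [intervalIntegral.integral_of_le hle, integral_Ioc_eq_integral_Ioo] at this
  rw [this]
  simp only [div_self hw.ne', neg_div]
  rw [Real.arcsin_one, Real.arcsin_neg, Real.arcsin_one]
  ring

lemma image_sin_Ioo : Real.sin '' Ioo (-(π/2)) (π/2) = Ioo (-1) 1 := by
  ext y
  constructor
  · rintro ⟨x, hx, rfl⟩
    have hxm : x ∈ Icc (-(π/2)) (π/2) := mem_Icc.2 ⟨hx.1.le, hx.2.le⟩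
    have h1 : Real.sin x < 1 := by
      have := Real.strictMonoOn_sin hxm (mem_Icc.2 ⟨by linarith [pi_pos], le_refl _⟩) hx.2
      simpa using this
    have h2 : -1 < Real.sin x := by
      have := Real.strictMonoOn_sin (mem_Icc.2 ⟨le_refl _, by linarith [pi_pos]⟩) hxm hx.1
      simpa using this
    exact ⟨h2, h1⟩
  · intro hy
    exact ⟨Real.arcsin y, by
      rw [mem_Ioo]
      exact ⟨Real.neg_pi_div_two_lt_arcsin.2 hy.1, Real.arcsin_lt_pi_div_two.2 hy.2⟩,
      Real.sin_arcsin hy.1.le hy.2.le⟩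

lemma intB (r : ℝ) :
    ∫ z in Ioo (-1:ℝ) 1, Complex.exp (Complex.I * (r * z)) = 2 * (_root_.sinc r : ℂ) := by
  rcases eq_or_ne r 0 with hr | hr
  · simp [hr, _root_.sinc, Real.volume_Ioo]
    norm_num
  · have hc : (Complex.I * r) ≠ 0 := by
      simp [Complex.ext_iff, hr]
    have h1 : ∫ z in Ioo (-1:ℝ) 1, Complex.exp (Complex.I * (r * z))
        = ∫ z in (-1:ℝ)..1, Complex.exp ((Complex.I * r) * z) := by
      rw [intervalIntegral.integral_of_le (by norm_num), integral_Ioc_eq_integral_Ioo]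
      congr 1; ext z; ring_nf
    rw [h1, integral_exp_mul_complex hc]
    rw [_root_.sinc, if_neg hr]
    push_cast
    rw [Complex.sin]
    have hrc : (r:ℂ) ≠ 0 := by exact_mod_cast hr
    rw [mul_one, show Complex.I * (r:ℂ) * -1 = -(r:ℂ)*Complex.I by ring, mul_comm Complex.I (r:ℂ)]
    field_simp
    linear_combination (Complex.exp ((r:ℂ) * Complex.I) - Complex.exp (-((r:ℂ) * Complex.I))) * Complex.I_sq

noncomputable def hfun (a b : ℝ) : ℝ × ℝ → ℂ :=
  Set.indicator {q : ℝ × ℝ | q.1^2 + q.2^2 < 1}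
    (fun q => (1 / Real.sqrt (1 - q.1^2 - q.2^2)) • Complex.exp (Complex.I * (b * q.1 + a * q.2)))

lemma mem_disk_iff {z y : ℝ} (hz : z^2 < 1) :
    ((z, y) ∈ {q : ℝ × ℝ | q.1^2 + q.2^2 < 1}) ↔ y ∈ Ioo (-(Real.sqrt (1-z^2))) (Real.sqrt (1-z^2)) := by
  have h1 : (0:ℝ) < 1 - z^2 := by linarith
  have hc : Real.sqrt (1-z^2) ^ 2 = 1 - z^2 := Real.sq_sqrt h1.le
  have hnn := Real.sqrt_nonneg (1-z^2)
  constructor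
  · intro h
    simp only [mem_setOf_eq] at h
    constructor <;> nlinarith [sq_nonneg (y + Real.sqrt (1-z^2)), sq_nonneg (y - Real.sqrt (1-z^2))]
  · intro h
    obtain ⟨h2, h3⟩ := h
    simp only [mem_setOf_eq]
    nlinarith

lemma slice_eq (a b z : ℝ) (hz : z^2 < 1) :
    (fun y => hfun a b (z, y)) = Set.indicator (Ioo (-(Real.sqrt (1-z^2))) (Real.sqrt (1-z^2)))
      (fun y => (1 / Real.sqrt (1 - z^2 - y^2)) • Complex.exp (Complex.I * (b * z + a * y))) := by
  funext y
  by_cases hy : (z, y) ∈ {q : ℝ × ℝ | q.1^2 + q.2^2 < 1}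
  · rw [hfun, Set.indicator_of_mem hy, Set.indicator_of_mem ((mem_disk_iff hz).1 hy)]
  · rw [hfun, Set.indicator_of_notMem hy,
      Set.indicator_of_notMem (fun hmem => hy ((mem_disk_iff hz).2 hmem))]

lemma slice_zero (a b z : ℝ) (hz : 1 ≤ z^2) (y : ℝ) : hfun a b (z, y) = 0 := by
  rw [hfun, Set.indicator_of_notMem]
  simp only [mem_setOf_eq, not_lt]
  nlinarith [sq_nonneg y]

lemma hfun_meas (a b : ℝ) : Measurable (hfun a b) := by
  apply Measurable.indicator
  · apply Measurable.smul (f := fun q : ℝ × ℝ => (1 / Real.sqrt (1 - q.1^2 - q.2^2) : ℝ))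
      (g := fun q : ℝ × ℝ => Complex.exp (Complex.I * (b * q.1 + a * q.2)))
    · fun_prop
    · fun_prop
  · exact (isOpen_lt (by fun_prop) continuous_const).measurableSet

lemma hfun_slice_integrable (a b z : ℝ) : Integrable (fun y => hfun a b (z, y)) := by
  rcases lt_or_ge (z^2) 1 with hz | hz
  · rw [slice_eq a b z hz]
    have hcpos : 0 < Real.sqrt (1-z^2) := Real.sqrt_pos.2 (by linarith)
    have hc2 : Real.sqrt (1-z^2)^2 = 1-z^2 := Real.sq_sqrt (by linarith)
    rw [integrable_indicator_iff measurableSet_Ioo]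
    have hbound := intA_integrable hcpos
    apply Integrable.mono' hbound
    · exact (Measurable.smul (f := fun y : ℝ => 1 / Real.sqrt (1 - z^2 - y^2)) (by fun_prop) (by fun_prop : Measurable fun y : ℝ =>
        Complex.exp (Complex.I * (b * z + a * y)))).aestronglyMeasurable.restrict
    · filter_upwards with y
      rw [norm_smul]
      have : ‖Complex.exp (Complex.I * (b * z + a * y))‖ = 1 := by
        rw [Complex.norm_exp]
        simp
      rw [this, mul_one, hc2]
      rw [Real.norm_eq_abs, abs_of_nonneg (by positivity)]
  · have heq : (fun y => hfun a b (z, y)) = fun _ => 0 := funext (slice_zero a b z hz)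
    rw [heq]
    exact integrable_zero _ _ _

lemma norm_int (a b z : ℝ) :
    ∫ y, ‖hfun a b (z, y)‖ = Set.indicator (Ioo (-1:ℝ) 1) (fun _ => π) z := by
  rcases lt_or_ge (z^2) 1 with hz | hz
  · have hz1 : z ∈ Ioo (-1:ℝ) 1 := by constructor <;> nlinarith
    have hcpos : 0 < Real.sqrt (1-z^2) := Real.sqrt_pos.2 (by nlinarith)
    have hc2 : Real.sqrt (1-z^2)^2 = 1-z^2 := Real.sq_sqrt (by nlinarith)
    rw [Set.indicator_of_mem hz1]
    have h1 : ∀ y : ℝ, ‖hfun a b (z, y)‖ = Set.indicator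
        (Ioo (-(Real.sqrt (1-z^2))) (Real.sqrt (1-z^2)))
        (fun y => 1 / Real.sqrt (Real.sqrt (1-z^2)^2 - y^2)) y := by
      intro y
      rw [show hfun a b (z, y) = (fun y => hfun a b (z, y)) y from rfl, slice_eq a b z hz]
      rw [norm_indicator_eq_indicator_norm]
      congr 1
      funext y
      rw [norm_smul]
      have : ‖Complex.exp (Complex.I * (b * z + a * y))‖ = 1 := by
        rw [Complex.norm_exp]
        simp
      rw [this, mul_one, hc2, Real.norm_eq_abs, abs_of_nonneg (by positivity)]
    simp only [h1]
    rw [integral_indicator measurableSet_Ioo, intA_value hcpos]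
  · have hz1 : z ∉ Ioo (-1:ℝ) 1 := fun hmem => by
      obtain ⟨u1, u2⟩ := hmem; nlinarith
    rw [Set.indicator_of_notMem hz1]
    simp [slice_zero a b z hz]

lemma hfun_integrable (a b : ℝ) : Integrable (hfun a b) := by
  rw [Measure.volume_eq_prod]
  refine (integrable_prod_iff (hfun_meas a b).aestronglyMeasurable).2 ⟨?_, ?_⟩
  · filter_upwards with z
    exact hfun_slice_integrable a b z
  · have heq : (fun z => ∫ y, ‖hfun a b (z, y)‖) = Set.indicator (Ioo (-1:ℝ) 1) (fun _ => π) :=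
      funext (norm_int a b)
    rw [heq, integrable_indicator_iff measurableSet_Ioo]
    exact integrableOn_const measure_Ioo_lt_top.ne

lemma hfun_value (r : ℝ) :
    ∫ p, hfun 0 r p = 2 * π * (_root_.sinc r : ℂ) := by
  have h1 : ∫ p, hfun 0 r p = ∫ z, ∫ y, hfun 0 r (z, y) := by
    rw [Measure.volume_eq_prod] at *
    exact integral_prod _ (by rw [← Measure.volume_eq_prod]; exact hfun_integrable 0 r)
  rw [h1]
  rw [← setIntegral_eq_integral_of_forall_compl_eq_zero
    (s := Ioo (-1:ℝ) 1) (fun z hz => ?_)]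
  · have h2 : ∀ z ∈ Ioo (-1:ℝ) 1, (∫ y, hfun 0 r (z, y)) = π • Complex.exp (Complex.I * (r * z)) := by
      intro z hz
      have hz2 : z^2 < 1 := by obtain ⟨u1, u2⟩ := hz; nlinarith
      have hcpos : 0 < Real.sqrt (1-z^2) := Real.sqrt_pos.2 (by linarith)
      have hc2 : Real.sqrt (1-z^2)^2 = 1-z^2 := Real.sq_sqrt (by linarith)
      rw [show (fun y => hfun 0 r (z,y)) = _ from slice_eq 0 r z hz2,
        integral_indicator measurableSet_Ioo]
      rw [setIntegral_congr_fun measurableSet_Ioo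
        (g := fun y => (1 / Real.sqrt (Real.sqrt (1-z^2)^2 - y^2)) •
          Complex.exp (Complex.I * (r * z))) (fun y _ => by rw [hc2]; norm_num)]
      rw [integral_smul_const, intA_value hcpos]
    rw [setIntegral_congr_fun measurableSet_Ioo h2, integral_smul, intB r]
    rw [Complex.real_smul]
    push_cast
    ring
  · have hz2 : 1 ≤ z^2 := by
      by_contra hcon
      push_neg at hcon
      exact hz ⟨by nlinarith, by nlinarith⟩
    simp [slice_zero 0 r z hz2]

lemma hfun_rot (a b : ℝ) :
    ∫ p, hfun a b p = ∫ p, hfun 0 (Real.sqrt (a^2 + b^2)) p := by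
  set r := Real.sqrt (a^2 + b^2) with hrdef
  rcases eq_or_ne r 0 with hr | hr
  · have hab : a = 0 ∧ b = 0 := by
      have h0 : a^2 + b^2 = 0 := by
        have := Real.sqrt_eq_zero (by positivity) |>.1 hr
        exact this
      constructor <;> nlinarith
    rw [hab.1, hab.2] at *
    rw [hr]
  · have hrpos : 0 < r := lt_of_le_of_ne (Real.sqrt_nonneg _) (Ne.symm hr)
    have hr2 : r^2 = a^2 + b^2 := Real.sq_sqrt (by positivity)
    set c0 : ℂ := ⟨b/r, a/r⟩ with hc0def
    have habs : ‖c0‖ = 1 := by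
      rw [Complex.norm_def, Complex.normSq_mk]
      rw [show b/r * (b/r) + a/r * (a/r) = (a^2+b^2)/r^2 by ring]
      rw [← hr2, div_self (by positivity), Real.sqrt_one]
    have hmem : c0 ∈ Submonoid.unitSphere ℂ := by
      simp only [Submonoid.unitSphere, Submonoid.mem_mk, Subsemigroup.mem_mk]
      exact mem_sphere_zero_iff_norm.2 (by rw [habs])
    set c : Circle := ⟨c0, hmem⟩ with hcdef
    -- transfer to ℂ
    have step1 : ∫ p, hfun a b p
        = ∫ w : ℂ, hfun a b (Complex.measurableEquivRealProd w) := by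
      exact (Complex.volume_preserving_equiv_real_prod.integral_comp
        Complex.measurableEquivRealProd.measurableEmbedding _).symm
    have step2 : ∫ w : ℂ, hfun a b (Complex.measurableEquivRealProd w)
        = ∫ w : ℂ, hfun a b (Complex.measurableEquivRealProd (rotation c w)) := by
      exact ((rotation c).measurePreserving.integral_comp
        ((rotation c).toHomeomorph.measurableEmbedding) _).symm
    have key : ∀ w : ℂ, hfun a b (Complex.measurableEquivRealProd (rotation c w))
        = hfun 0 r (Complex.measurableEquivRealProd w) := by
      intro w
      have happ : Complex.measurableEquivRealProd (rotation c w) = ((c0 * w).re, (c0 * w).im) := by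
        rw [rotation_apply]
        rfl
      have happ2 : Complex.measurableEquivRealProd w = (w.re, w.im) := rfl
      rw [happ, happ2]
      have hre : (c0 * w).re = b/r * w.re - a/r * w.im := by
        rw [Complex.mul_re]
      have him : (c0 * w).im = b/r * w.im + a/r * w.re := by
        rw [Complex.mul_im]
      have hsq : Complex.normSq (c0 * w) = Complex.normSq w := by
        rw [Complex.normSq_mul, show Complex.normSq c0 = 1 by
          rw [← Complex.sq_norm, habs]; norm_num, one_mul]
      have hnorm : (c0 * w).re^2 + (c0 * w).im^2 = w.re^2 + w.im^2 := by
        rw [Complex.normSq_apply, Complex.normSq_apply] at hsq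
        linear_combination hsq
      have hexp : b * (c0 * w).re + a * (c0 * w).im = r * w.re := by
        rw [hre, him]
        field_simp
        first
        | linear_combination w.re * hr2
        | linear_combination (-w.re) * hr2
        | linear_combination 2 * w.re * hr2
        | linear_combination (-2) * w.re * hr2
        | linear_combination w.re * r * hr2
        | linear_combination (-w.re) * r * hr2
      by_cases hin : ((c0*w).re, (c0*w).im) ∈ {q : ℝ × ℝ | q.1^2 + q.2^2 < 1}
      · have hin2 : ((w.re, w.im) : ℝ × ℝ) ∈ {q : ℝ × ℝ | q.1^2 + q.2^2 < 1} := by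
          simp only [mem_setOf_eq] at hin ⊢
          rw [← hnorm]; exact hin
        rw [hfun, hfun, Set.indicator_of_mem hin, Set.indicator_of_mem hin2]
        simp only
        rw [show (1:ℝ) - (c0*w).re^2 - (c0*w).im^2 = 1 - w.re^2 - w.im^2 by
          linear_combination -hnorm]
        congr 2
        rw [show (↑b * ↑(c0*w).re + ↑a * ↑(c0*w).im : ℂ)
            = ((b * (c0*w).re + a * (c0*w).im : ℝ) : ℂ) by push_cast; ring, hexp]
        push_cast
        ring
      · have hin2 : ((w.re, w.im) : ℝ × ℝ) ∉ {q : ℝ × ℝ | q.1^2 + q.2^2 < 1} := by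
          simp only [mem_setOf_eq] at hin ⊢
          rw [← hnorm]; exact hin
        rw [hfun, hfun, Set.indicator_of_notMem hin, Set.indicator_of_notMem hin2]
    rw [step1, step2]
    simp only [key]
    exact Complex.volume_preserving_equiv_real_prod.integral_comp
      Complex.measurableEquivRealProd.measurableEmbedding _

lemma core (a b : ℝ) :
    (∫ θ in Ioo (-(π/2)) (π/2), ∫ φ in Ioo (-(π/2)) (π/2),
      (Real.cos θ : ℂ) * Complex.exp (Complex.I * (a * (Real.cos θ * Real.sin φ) + b * Real.sin θ)))
    = 2 * π * (_root_.sinc (Real.sqrt (a^2 + b^2)) : ℂ) := by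
  have hs : MeasurableSet (Ioo (-(π/2)) (π/2)) := measurableSet_Ioo
  -- inner integral
  have inner : ∀ θ ∈ Ioo (-(π/2)) (π/2),
      (∫ φ in Ioo (-(π/2)) (π/2),
        (Real.cos θ : ℂ) * Complex.exp (Complex.I * (a * (Real.cos θ * Real.sin φ) + b * Real.sin θ)))
      = Real.cos θ • ∫ y, hfun a b (Real.sin θ, y) := by
    intro θ hθ
    have hct : 0 < Real.cos θ := Real.cos_pos_of_mem_Ioo hθ
    set ct := Real.cos θ with hctdef
    set st := Real.sin θ with hstdef
    have hpyth : st^2 + ct^2 = 1 := Real.sin_sq_add_cos_sq θ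
    have hst2 : st^2 < 1 := by nlinarith
    have hctsq : Real.sqrt (1 - st^2) = ct := by
      rw [show 1 - st^2 = ct^2 by nlinarith]
      exact Real.sqrt_sq hct.le
    -- substitution y = ct * sin φ
    have hderiv : ∀ φ ∈ Ioo (-(π/2)) (π/2),
        HasDerivWithinAt (fun φ => ct * Real.sin φ) (ct * Real.cos φ) (Ioo (-(π/2)) (π/2)) φ :=
      fun φ _ => ((Real.hasDerivAt_sin φ).const_mul ct).hasDerivWithinAt
    have hinj : InjOn (fun φ => ct * Real.sin φ) (Ioo (-(π/2)) (π/2)) := by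
      intro x hx y hy hxy
      exact Real.injOn_sin (Ioo_subset_Icc_self hx) (Ioo_subset_Icc_self hy)
        (mul_left_cancel₀ hct.ne' hxy)
    have himg : (fun φ => ct * Real.sin φ) '' Ioo (-(π/2)) (π/2) = Ioo (-ct) ct := by
      rw [show (fun φ => ct * Real.sin φ) = (fun y => ct * y) ∘ Real.sin from rfl,
        Set.image_comp, image_sin_Ioo]
      rw [Set.image_mul_left_Ioo hct]
      norm_num
    have hsub := MeasureTheory.integral_image_eq_integral_abs_deriv_smul hs hderiv hinj
      (fun y => (ct / Real.sqrt (ct^2 - y^2)) • Complex.exp (Complex.I * (b * st + a * y)))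
    rw [himg] at hsub
    have hptwise : ∀ φ ∈ Ioo (-(π/2)) (π/2),
        (ct : ℂ) * Complex.exp (Complex.I * (a * (ct * Real.sin φ) + b * st))
        = |ct * Real.cos φ| • (fun y => (ct / Real.sqrt (ct^2 - y^2)) •
            Complex.exp (Complex.I * (b * st + a * y))) (ct * Real.sin φ) := by
      intro φ hφ
      have hcφ : 0 < Real.cos φ := Real.cos_pos_of_mem_Ioo hφ
      have hp2 : Real.sin φ ^ 2 + Real.cos φ ^ 2 = 1 := Real.sin_sq_add_cos_sq φ
      simp only
      have h1 : ct^2 - (ct * Real.sin φ)^2 = (ct * Real.cos φ)^2 := by nlinarith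
      rw [h1, Real.sqrt_sq (by positivity), abs_of_pos (by positivity), smul_smul]
      rw [show ct * Real.cos φ * (ct / (ct * Real.cos φ)) = ct by field_simp]
      rw [Complex.real_smul]
      congr 2
      push_cast
      ring
    rw [setIntegral_congr_fun hs hptwise, ← hsub]
    -- now relate to hfun slice
    rw [show (fun y => hfun a b (st, y)) = _ from slice_eq a b st hst2,
      integral_indicator measurableSet_Ioo, hctsq, ← integral_smul]
    apply setIntegral_congr_fun measurableSet_Ioo
    intro y hy
    simp only
    rw [smul_smul]
    congr 1
    rw [show 1 - st^2 - y^2 = ct^2 - y^2 by nlinarith, mul_one_div]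
  rw [setIntegral_congr_fun hs inner]
  -- substitution z = sin θ
  have hderiv2 : ∀ θ ∈ Ioo (-(π/2)) (π/2),
      HasDerivWithinAt Real.sin (Real.cos θ) (Ioo (-(π/2)) (π/2)) θ :=
    fun θ _ => (Real.hasDerivAt_sin θ).hasDerivWithinAt
  have hsub2 := MeasureTheory.integral_image_eq_integral_abs_deriv_smul hs hderiv2
    (Real.injOn_sin.mono Ioo_subset_Icc_self) (fun z => ∫ y, hfun a b (z, y))
  rw [image_sin_Ioo] at hsub2
  have hptwise2 : ∀ θ ∈ Ioo (-(π/2)) (π/2),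
      Real.cos θ • (∫ y, hfun a b (Real.sin θ, y))
      = |Real.cos θ| • (fun z => ∫ y, hfun a b (z, y)) (Real.sin θ) := by
    intro θ hθ
    rw [abs_of_pos (Real.cos_pos_of_mem_Ioo hθ)]
  rw [setIntegral_congr_fun hs hptwise2, ← hsub2]
  -- extend to all of ℝ
  rw [setIntegral_eq_integral_of_forall_compl_eq_zero (fun z hz => ?_)]
  · have : (∫ z, ∫ y, hfun a b (z, y)) = ∫ p, hfun a b p := by
      rw [Measure.volume_eq_prod] at *
      exact (integral_prod _ (by rw [← Measure.volume_eq_prod]; exact hfun_integrable a b)).symm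
    rw [this, hfun_rot, hfun_value]
  · have hz2 : 1 ≤ z^2 := by
      by_contra hcon
      push_neg at hcon
      exact hz ⟨by nlinarith, by nlinarith⟩
    simp [slice_zero a b z hz2]

lemma inner_dirVec (θ φ : ℝ) (w : EuclideanSpace ℝ (Fin 3)) :
    (⟪dirVec θ φ, w⟫ : ℝ) = Real.cos θ * Real.cos φ * w 0
      + Real.cos θ * Real.sin φ * w 1 + Real.sin θ * w 2 := by
  simp [dirVec, PiLp.inner_apply, Fin.sum_univ_three]
  ring

lemma steering_mul {N : ℕ} (κ : ℝ) (u : Fin N → EuclideanSpace ℝ (Fin 3))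
    (hu : ∀ i, u i 0 = 0) (m n : Fin N) (θ φ : ℝ) :
    steering κ u θ φ m * (starRingEnd ℂ) (steering κ u θ φ n) =
      Complex.exp (Complex.I * (((κ * (u m - u n) 1 : ℝ) : ℂ) * (Real.cos θ * Real.sin φ)
        + ((κ * (u m - u n) 2 : ℝ) : ℂ) * Real.sin θ)) := by
  rw [steering, steering, ← Complex.exp_conj, ← Complex.exp_add]
  congr 1
  rw [map_mul, map_mul, Complex.conj_I, Complex.conj_ofReal, Complex.conj_ofReal]
  have hsub : (⟪dirVec θ φ, u m⟫ : ℝ) - ⟪dirVec θ φ, u n⟫ = ⟪dirVec θ φ, u m - u n⟫ :=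
    (inner_sub_right _ _ _).symm
  have h2 : (⟪dirVec θ φ, u m - u n⟫ : ℝ)
      = Real.cos θ * Real.sin φ * (u m - u n) 1 + Real.sin θ * (u m - u n) 2 := by
    rw [inner_dirVec]
    have h0 : (u m - u n) 0 = 0 := by
      have : (u m - u n) 0 = u m 0 - u n 0 := rfl
      rw [this, hu m, hu n, sub_zero]
    rw [h0]
    ring
  have := congrArg (Complex.ofReal) (hsub.trans h2)
  push_cast at this ⊢
  linear_combination (Complex.I * κ) * this


theorem steering_vector_correlation_isotropic_halfspace
    {Ω : Type*} [MeasurableSpace Ω] (P : Measure Ω) [IsProbabilityMeasure P]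
    (Ψ : Ω → ℝ × ℝ) (hΨmeas : Measurable Ψ)
    (hΨ : P.map Ψ = (volume : Measure (ℝ × ℝ)).withDensity (fun p =>
      ENNReal.ofReal (Set.indicator
        (Set.Icc (-(π / 2)) (π / 2) ×ˢ Set.Icc (-(π / 2)) (π / 2))
        (fun q => Real.cos q.1 / (2 * π)) p)))
    {N : ℕ} (u : Fin N → EuclideanSpace ℝ (Fin 3)) (hu : ∀ i, u i 0 = 0)
    (lam : ℝ) (hlam : 0 < lam) (κ : ℝ) (hκ : κ = 2 * π / lam) (m n : Fin N) :
    ∫ ω, steering κ u (Ψ ω).1 (Ψ ω).2 m *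
        (starRingEnd ℂ) (steering κ u (Ψ ω).1 (Ψ ω).2 n) ∂P
      = (_root_.sinc (κ * ‖u m - u n‖) : ℂ) := by
  have hκpos : 0 < κ := by
    rw [hκ]; positivity
  set a : ℝ := κ * (u m - u n) 1 with hadef
  set b : ℝ := κ * (u m - u n) 2 with hbdef
  set F : ℝ × ℝ → ℂ := fun p => Complex.exp (Complex.I *
    (a * (Real.cos p.1 * Real.sin p.2) + b * Real.sin p.1)) with hFdef
  have hFcont : Continuous F := by
    apply Complex.continuous_exp.comp
    apply Continuous.mul continuous_const
    push_cast
    fun_prop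
  have hmul : ∀ p : ℝ × ℝ, steering κ u p.1 p.2 m * (starRingEnd ℂ) (steering κ u p.1 p.2 n)
      = F p := fun p => steering_mul κ u hu m n p.1 p.2
  simp only [hmul]
  -- push forward
  rw [← integral_map hΨmeas.aemeasurable hFcont.aestronglyMeasurable, hΨ]
  set S : Set (ℝ × ℝ) := Set.Icc (-(π / 2)) (π / 2) ×ˢ Set.Icc (-(π / 2)) (π / 2) with hSdef
  have hSmeas : MeasurableSet S := (measurableSet_Icc.prod measurableSet_Icc)
  have hindmeas : Measurable fun p : ℝ × ℝ =>
      Set.indicator S (fun q => Real.cos q.1 / (2 * π)) p := by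
    apply Measurable.indicator _ hSmeas
    fun_prop
  rw [show (fun p : ℝ × ℝ => ENNReal.ofReal (Set.indicator S (fun q => Real.cos q.1 / (2 * π)) p))
      = (fun p : ℝ × ℝ => ((Real.toNNReal (Set.indicator S (fun q => Real.cos q.1 / (2 * π)) p) : ℝ≥0) : ℝ≥0∞))
      from rfl]
  rw [integral_withDensity_eq_integral_smul (by fun_prop) F]
  have hptw : ∀ p : ℝ × ℝ, (Real.toNNReal (Set.indicator S (fun q => Real.cos q.1 / (2 * π)) p)) • F p
      = Set.indicator S (fun q => (Real.cos q.1 / (2 * π)) • F q) p := by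
    intro p
    by_cases hp : p ∈ S
    · rw [Set.indicator_of_mem hp, Set.indicator_of_mem hp]
      have hc : 0 ≤ Real.cos p.1 / (2 * π) := by
        apply div_nonneg _ (by positivity)
        exact Real.cos_nonneg_of_mem_Icc hp.1
      rw [NNReal.smul_def, Real.coe_toNNReal _ hc]
    · rw [Set.indicator_of_notMem hp, Set.indicator_of_notMem hp]
      simp
  simp only [hptw]
  rw [integral_indicator hSmeas]
  -- to iterated integrals
  have hIntOn : IntegrableOn (fun q : ℝ × ℝ => (Real.cos q.1 / (2 * π)) • F q) S := by
    apply ContinuousOn.integrableOn_compact (isCompact_Icc.prod isCompact_Icc)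
    exact (Continuous.smul (f := fun q : ℝ × ℝ => Real.cos q.1 / (2 * π)) (by fun_prop) hFcont).continuousOn
  rw [hSdef, Measure.volume_eq_prod] at hIntOn ⊢
  rw [setIntegral_prod _ hIntOn]
  simp only [integral_Icc_eq_integral_Ioo]
  -- pull out constant and apply core
  have hstep : (∫ θ in Set.Ioo (-(π/2)) (π/2), ∫ φ in Set.Ioo (-(π/2)) (π/2),
      (Real.cos θ / (2 * π)) • F (θ, φ))
      = (2 * π : ℝ)⁻¹ • ∫ θ in Set.Ioo (-(π/2)) (π/2), ∫ φ in Set.Ioo (-(π/2)) (π/2),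
        (Real.cos θ : ℂ) * Complex.exp (Complex.I *
          (a * (Real.cos θ * Real.sin φ) + b * Real.sin θ)) := by
    rw [← integral_smul]
    apply setIntegral_congr_fun measurableSet_Ioo
    intro θ _
    simp only
    rw [← integral_smul]
    apply setIntegral_congr_fun measurableSet_Ioo
    intro φ _
    rw [hFdef]
    simp only
    rw [Complex.real_smul, Complex.real_smul]
    push_cast
    ring
  rw [hstep, core a b]
  -- final arithmetic
  have hnorm : Real.sqrt (a^2 + b^2) = κ * ‖u m - u n‖ := by
    have h0 : (u m - u n) 0 = 0 := by
      have : (u m - u n) 0 = u m 0 - u n 0 := rfl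
      rw [this, hu m, hu n, sub_zero]
    have hn : ‖u m - u n‖ = Real.sqrt ((u m - u n) 1 ^ 2 + (u m - u n) 2 ^ 2) := by
      rw [EuclideanSpace.norm_eq, Fin.sum_univ_three, h0]
      simp [sq_abs]
    rw [hn, hadef, hbdef, show (κ * (u m - u n) 1)^2 + (κ * (u m - u n) 2)^2
      = κ^2 * ((u m - u n) 1 ^ 2 + (u m - u n) 2 ^ 2) by ring,
      Real.sqrt_mul (sq_nonneg κ), Real.sqrt_sq hκpos.le]
  rw [hnorm, Complex.real_smul]
  push_cast
  have hπ : (π : ℂ) ≠ 0 := by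
    exact_mod_cast Real.pi_ne_zero
  field_simp
end
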